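/- Assume additionally that ξ ≥ 1 and γ ≥ ξ/(R−ρ)^n. Then for every s ≥ ξ/γ one has γ F(s) ≥ F′(s), where F′(s) = f(s^{1/n})/n is the derivative of F. Equivalently, n γ F(s) − n F′(s) ≥ 0 for all s ≥ ξ/γ. -/

import Mathlib

open MeasureTheory

theorem stmt8 (n : ℕ) (hn : 3 ≤ n) (R ρ α f0 : ℝ)
    (hR : R ∈ Set.Ioo (0 : ℝ) 1) (hρ : ρ ∈ Set.Ioo (0 : ℝ) (R / 2))
    (hα : α ∈ Set.Ioo (2 : ℝ) n) (hf0 : 0 < f0)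
    (f : ℝ → ℝ) (hf_smooth : ContDiffOn ℝ 1 f (Set.Ioi 0))
    (hf_nonneg : ∀ r : ℝ, 0 < r → 0 ≤ f r)
    (hf_anti : AntitoneOn f (Set.Ioi 0))
    (hf_eq : ∀ r : ℝ, 0 < r → r ≤ R - ρ → f r = f0 * r ^ (-α))
    (hf_zero : ∀ r : ℝ, R + ρ ≤ r → f r = 0)
    (F : ℝ → ℝ)
    (hF : ∀ s : ℝ, 0 ≤ s → F s = ∫ r in (0 : ℝ)..(s ^ ((1 : ℝ) / n)), f r * r ^ (n - 1))
    (ξ γ : ℝ) (hξ : 1 ≤ ξ) (hγ : ξ / (R - ρ) ^ n ≤ γ) :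
    ∀ s : ℝ, ξ / γ ≤ s → f (s ^ ((1 : ℝ) / n)) / n ≤ γ * F s := by
  intro s hs
  have hRρ : 0 < R - ρ := by nlinarith [hρ.2, hρ.1, hR.1]
  have hγ0 : 0 < γ := lt_of_lt_of_le (by positivity) hγ
  have hs0 : 0 < s := lt_of_lt_of_le (by positivity) hs
  have hnR : (0:ℝ) < n := by positivity
  set t := s ^ ((1:ℝ)/n) with ht
  have ht0 : 0 < t := Real.rpow_pos_of_pos hs0 _
  have htn : t ^ n = s := by
    rw [ht, ← Real.rpow_natCast (s ^ ((1:ℝ)/n)) n, ← Real.rpow_mul hs0.le,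
      one_div, inv_mul_cancel₀ (ne_of_gt hnR), Real.rpow_one]
  -- integrability
  have key : ∀ b : ℝ, 0 < b → IntervalIntegrable (fun r => f r * r ^ (n-1)) volume 0 b := by
    have h1 : ∀ c : ℝ, 0 < c → c ≤ R - ρ →
        IntervalIntegrable (fun r => f r * r ^ (n-1)) volume 0 c := by
      intro c hc hcR
      have hexp : (-1:ℝ) < (n:ℝ) - 1 - α := by
        have := hα.2; linarith
      have hint : IntervalIntegrable (fun r : ℝ => f0 * r ^ ((n:ℝ) - 1 - α)) volume 0 c :=
        (intervalIntegral.intervalIntegrable_rpow' hexp).const_mul f0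
      rw [intervalIntegrable_iff] at hint ⊢
      apply hint.congr_fun ?_ measurableSet_uIoc
      intro r hr
      rw [Set.uIoc_of_le hc.le] at hr
      show f0 * r ^ ((n:ℝ) - 1 - α) = f r * r ^ (n - 1)
      have hr0 : 0 < r := hr.1
      have hrR : r ≤ R - ρ := hr.2.trans hcR
      rw [hf_eq r hr0 hrR]
      have : (r : ℝ) ^ (n-1) = r ^ (((n-1 : ℕ) : ℝ)) := (Real.rpow_natCast r (n-1)).symm
      rw [this, mul_assoc, ← Real.rpow_add hr0]
      congr 1
      push_cast [Nat.cast_sub (by omega : 1 ≤ n)]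
      ring
    intro b hb
    rcases le_or_gt b (R - ρ) with h | h
    · exact h1 b hb h
    · have hc := h1 (R - ρ) hRρ le_rfl
      have hcont : IntervalIntegrable (fun r => f r * r ^ (n-1)) volume (R - ρ) b := by
        apply ContinuousOn.intervalIntegrable
        apply ContinuousOn.mul
        · exact (hf_smooth.continuousOn).mono (by
            rw [Set.uIcc_of_le h.le]
            intro x hx
            exact lt_of_lt_of_le hRρ hx.1)
        · exact (continuous_pow (n-1)).continuousOn
      exact hc.trans hcont
  have hint1 := key t ht0
  have hint2 : IntervalIntegrable (fun r => f t * r ^ (n-1)) volume 0 t :=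
    (Continuous.intervalIntegrable (by continuity) 0 t)
  have ft0 : 0 ≤ f t := hf_nonneg t ht0
  have hmono : (∫ r in (0:ℝ)..t, f t * r ^ (n-1)) ≤ ∫ r in (0:ℝ)..t, f r * r ^ (n-1) := by
    apply intervalIntegral.integral_mono_on ht0.le hint2 hint1
    intro x hx
    rcases eq_or_lt_of_le hx.1 with hx0 | hx0
    · have : (n - 1 : ℕ) ≠ 0 := by omega
      simp [← hx0, zero_pow this]
    · exact mul_le_mul_of_nonneg_right (hf_anti hx0 ht0 hx.2) (by positivity)
  have hcalc : (∫ r in (0:ℝ)..t, f t * r ^ (n-1)) = f t * (s / n) := by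
    rw [intervalIntegral.integral_const_mul, integral_pow]
    have hsub : n - 1 + 1 = n := by omega
    rw [hsub, htn]
    have : (0:ℝ) ^ n = 0 := zero_pow (by omega)
    rw [this]
    push_cast [Nat.cast_sub (show 1 ≤ n by omega)]
    field_simp
    rw [sub_zero, sub_add_cancel, mul_div_assoc, div_self (ne_of_gt hnR), mul_one]
  have hFs : F s = ∫ r in (0:ℝ)..t, f r * r ^ (n-1) := hF s hs0.le
  have hγs : ξ ≤ γ * s := (div_le_iff₀' hγ0).mp hs
  have h1 : f t * (s / n) ≤ F s := by rw [hFs, ← hcalc]; exact hmono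
  have h2 : γ * (f t * (s / n)) ≤ γ * F s := mul_le_mul_of_nonneg_left h1 hγ0.le
  have h3 : f t * 1 ≤ f t * (γ * s) :=
    mul_le_mul_of_nonneg_left (le_trans hξ hγs) ft0
  calc f t / n = f t * 1 / n := by ring
    _ ≤ f t * (γ * s) / n := by apply div_le_div_of_nonneg_right h3 hnR.le
    _ = γ * (f t * (s / n)) := by ring
    _ ≤ γ * F s := h2
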